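/- The metric d_Ω(p,q) = log m(p,q) + log m(q,p) on a nonempty bounded open convex set Ω ⊆ ℝⁿ coincides with the Hilbert metric: if r, s are the intersection points of the line through p and q with ∂Ω, ordered as r, p, q, s, then d_Ω(p,q) = log((|rq|·|ps|)/(|rp|·|qs|)) for p ≠ q. -/

import Mathlib

open Set Pointwise

noncomputable def mGauge {n : ℕ} (Ω : Set (EuclideanSpace ℝ (Fin n)))
    (p q : EuclideanSpace ℝ (Fin n)) : ℝ :=
  sInf {l : ℝ | 0 < l ∧ (fun x => x - q) '' Ω ⊆ l • ((fun x => x - p) '' Ω)}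

lemma mGauge_eq {n : ℕ} {Ω : Set (EuclideanSpace ℝ (Fin n))}
    (ho : IsOpen Ω) (hc : Convex ℝ Ω)
    {p q r : EuclideanSpace ℝ (Fin n)} (hp : p ∈ Ω) (hq : q ∈ Ω)
    (hr : r ∈ frontier Ω) {a : ℝ} (ha : 0 < a)
    (hra : r = p - a • (q - p)) :
    mGauge Ω p q = (a + 1) / a := by
  have ha1 : (0:ℝ) < a + 1 := by linarith
  have hmem : (a + 1) / a ∈
      {l : ℝ | 0 < l ∧ (fun x => x - q) '' Ω ⊆ l • ((fun x => x - p) '' Ω)} := by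
    refine ⟨div_pos ha1 ha, ?_⟩
    rintro z ⟨x, hx, rfl⟩
    set y : EuclideanSpace ℝ (Fin n) := (a / (a + 1)) • x + ((1:ℝ) / (a + 1)) • r with hy
    have hyΩ : y ∈ Ω := by
      rw [← ho.interior_eq] at hx ⊢
      exact hc.combo_interior_closure_mem_interior hx hr.1
        (div_pos ha ha1) (by positivity)
        (by rw [← add_div]; exact div_self ha1.ne')
    refine ⟨y - p, ⟨y, hyΩ, rfl⟩, ?_⟩
    show ((a+1)/a) • (y - p) = x - q
    rw [hy, hra]
    match_scalars <;> field_simp <;> ring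
  have hlb : ∀ l ∈ {l : ℝ | 0 < l ∧ (fun x => x - q) '' Ω ⊆ l • ((fun x => x - p) '' Ω)},
      (a + 1) / a ≤ l := by
    rintro l ⟨hl, hincl⟩
    by_contra hlt
    push_neg at hlt
    have hrn : r ∉ Ω := fun h => hr.2 (by rwa [ho.interior_eq])
    obtain ⟨f, hf⟩ := geometric_hahn_banach_open_point hc ho hrn
    set t : ℝ := min 1 (((a+1)/a - l)/2) with ht
    have ht0 : 0 < t := lt_min one_pos (by linarith)
    have ht1 : t ≤ 1 := min_le_left _ _
    have htl : t < (a+1)/a - l := lt_of_le_of_lt (min_le_right _ _) (by linarith)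
    set x : EuclideanSpace ℝ (Fin n) := t • p + (1 - t) • r with hxdef
    have hxΩ : x ∈ Ω := by
      rw [← ho.interior_eq] at hp ⊢
      exact hc.combo_interior_closure_mem_interior hp hr.1 ht0 (by linarith) (by ring)
    obtain ⟨w, ⟨y, hy, rfl⟩, hw⟩ := hincl ⟨x, hxΩ, rfl⟩
    simp only at hw
    -- hw : l • (y - p) = x - q
    have hfy : f y < f r := hf y hy
    set c : ℝ := f r - f p with hcdef
    have hc0 : 0 < c := sub_pos.mpr (hf p hp)
    have hfq : f q = f p - c / a := by
      have h := congrArg f hra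
      simp only [map_sub, map_smul, smul_eq_mul] at h
      field_simp
      linarith [h]
    have hfw : l * (f y - f p) = f x - f q := by
      have h := congrArg f hw
      simpa [map_smul, map_sub, smul_eq_mul] using h
    have hfx : f x = t * f p + (1 - t) * f r := by
      simp [hxdef, map_add, map_smul, smul_eq_mul]
    have hfw2 : a * (l * (f y - f p)) = a * ((1 - t) * c) + c := by
      rw [hfw, hfx, hfq, hcdef]; field_simp; ring
    have htl2 : a * t + a * l < a + 1 := by
      have h := (lt_div_iff₀ ha).mp (show t + l < (a+1)/a by linarith)
      linarith
    have h4 : a * l * (f y - f p) < a * l * c :=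
      mul_lt_mul_of_pos_left (by linarith) (mul_pos ha hl)
    nlinarith [mul_pos hc0 (show (0:ℝ) < a + 1 - a*t - a*l by linarith)]
  exact le_antisymm (csInf_le ⟨(a+1)/a, fun l hl => hlb l hl⟩ hmem)
    (le_csInf ⟨_, hmem⟩ hlb)

lemma sbtw_coeff {n : ℕ} {r p q : EuclideanSpace ℝ (Fin n)} (h : Sbtw ℝ r p q) :
    ∃ a : ℝ, 0 < a ∧ r = p - a • (q - p) := by
  obtain ⟨t1, t2, h10, h20, hsum, heq⟩ := h.wbtw.mem_segment
  have ht1 : 0 < t1 := by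
    rcases h10.eq_or_lt with hh | hh
    · exfalso; apply h.ne_right
      have ht2' : t2 = 1 := by linarith
      rw [← heq, ← hh, ht2']; simp
    · exact hh
  have ht2 : 0 < t2 := by
    rcases h20.eq_or_lt with hh | hh
    · exfalso; apply h.ne_left
      have ht1' : t1 = 1 := by linarith
      rw [← heq, ← hh, ht1']; simp
    · exact hh
  refine ⟨t2 / t1, div_pos ht2 ht1, ?_⟩
  apply smul_right_injective (EuclideanSpace ℝ (Fin n)) ht1.ne'
  show t1 • r = t1 • (p - (t2 / t1) • (q - p))
  have h2 : t1 • r = p - t2 • q := by rw [← heq]; abel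
  rw [h2]
  match_scalars <;> field_simp <;> linarith

theorem stmt_10 {n : ℕ} (Ω : Set (EuclideanSpace ℝ (Fin n)))
    (hne : Ω.Nonempty) (hb : Bornology.IsBounded Ω) (ho : IsOpen Ω)
    (hc : Convex ℝ Ω) (p q r s : EuclideanSpace ℝ (Fin n))
    (hp : p ∈ Ω) (hq : q ∈ Ω) (hpq : p ≠ q)
    (hr : r ∈ frontier Ω) (hs : s ∈ frontier Ω)
    (h1 : Sbtw ℝ r p q) (h2 : Sbtw ℝ p q s) :
    Real.log (mGauge Ω p q) + Real.log (mGauge Ω q p) =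
      Real.log ((dist r q * dist p s) / (dist r p * dist q s)) := by
  obtain ⟨a, ha, hra⟩ := sbtw_coeff h1
  obtain ⟨b, hb', hsb⟩ := sbtw_coeff h2.symm
  have hm1 : mGauge Ω p q = (a + 1) / a := mGauge_eq ho hc hp hq hr ha hra
  have hm2 : mGauge Ω q p = (b + 1) / b := mGauge_eq ho hc hq hp hs hb' hsb
  set d : ℝ := ‖(q - p : EuclideanSpace ℝ (Fin n))‖ with hd
  have hd0 : 0 < d := by
    rw [hd, norm_pos_iff, sub_ne_zero]; exact fun h => hpq h.symm
  have e1 : dist r p = a * d := by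
    rw [dist_eq_norm, show r - p = (-a) • (q - p) by rw [hra]; module, norm_smul, Real.norm_eq_abs, abs_neg, abs_of_pos ha]
  have e2 : dist r q = (a + 1) * d := by
    rw [dist_eq_norm, show r - q = (-(a+1)) • (q - p) by rw [hra]; module, norm_smul, Real.norm_eq_abs, abs_neg,
      abs_of_pos (show (0:ℝ) < a + 1 by linarith)]
  have e3 : dist p s = (b + 1) * d := by
    rw [dist_eq_norm, show p - s = (-(b+1)) • (q - p) by rw [hsb]; module, norm_smul, Real.norm_eq_abs, abs_neg,
      abs_of_pos (show (0:ℝ) < b + 1 by linarith)]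
  have e4 : dist q s = b * d := by
    rw [dist_eq_norm, show q - s = (-b) • (q - p) by rw [hsb]; module, norm_smul, Real.norm_eq_abs, abs_neg, abs_of_pos hb']
  have hpos1 : (0:ℝ) < (a + 1) / a := div_pos (by linarith) ha
  have hpos2 : (0:ℝ) < (b + 1) / b := div_pos (by linarith) hb'
  rw [hm1, hm2, ← Real.log_mul hpos1.ne' hpos2.ne', e1, e2, e3, e4]
  congr 1
  field_simp
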